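/- Let Y be finite, π' and π_s full-support distributions on Y, R : Y → ℝ, β > 0. The GVPO loss L(π) = E_{y∼π_s}[((R_π(y) − E_{π_s}R_π) − (R(y) − E_{π_s}R))²] with R_π(y) = β log(π(y)/π'(y)) has the same unique minimizer π* = Gibbs(π', R, β) for every choice of full-support sampling distribution π_s. -/

import Mathlib

open Finset

theorem gvpo_minimizer_independent_of_sampling
    {Y : Type*} [Fintype Y] [Nonempty Y]
    (π' : Y → ℝ) (hπ' : ∀ y, 0 < π' y) (hπ'1 : ∑ y, π' y = 1)
    (R : Y → ℝ) (β : ℝ) (hβ : 0 < β)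
    (πstar : Y → ℝ)
    (hπstar : ∀ y, πstar y = π' y * Real.exp (R y / β) /
      (∑ z, π' z * Real.exp (R z / β)))
    (L : (Y → ℝ) → (Y → ℝ) → ℝ)
    (hL : ∀ πs π, L πs π = ∑ y, πs y *
      (((β * Real.log (π y / π' y)) - ∑ z, πs z * (β * Real.log (π z / π' z)))
        - (R y - ∑ z, πs z * R z))^2) :
    ∀ πs : Y → ℝ, (∀ y, 0 < πs y) → (∑ y, πs y = 1) →
      ∀ π : Y → ℝ, (∀ y, 0 < π y) → (∑ y, π y = 1) →
        L πs πstar ≤ L πs π ∧ (L πs π = L πs πstar ↔ π = πstar) := by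
  intro πs hπs hπs1 π hπ hπ1
  set Z : ℝ := ∑ z, π' z * Real.exp (R z / β) with hZ
  have hZpos : 0 < Z :=
    Finset.sum_pos (fun z _ => mul_pos (hπ' z) (Real.exp_pos _)) Finset.univ_nonempty
  have hβ' : (β : ℝ) ≠ 0 := ne_of_gt hβ
  -- rewrite L in terms of g y = β log(p y / π' y) - R y
  have hLg : ∀ p : Y → ℝ, L πs p = ∑ y, πs y *
      ((β * Real.log (p y / π' y) - R y)
        - ∑ z, πs z * (β * Real.log (p z / π' z) - R z))^2 := by
    intro p
    rw [hL]
    apply Finset.sum_congr rfl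
    intro y _
    have h1 : ∑ z, πs z * (β * Real.log (p z / π' z) - R z)
        = (∑ z, πs z * (β * Real.log (p z / π' z))) - ∑ z, πs z * R z := by
      rw [← Finset.sum_sub_distrib]
      exact Finset.sum_congr rfl fun z _ => by ring
    rw [h1]; ring
  -- value of g at πstar is constant
  have hstar_g : ∀ y, β * Real.log (πstar y / π' y) - R y = -(β * Real.log Z) := by
    intro y
    rw [hπstar y]
    have h1 : π' y * Real.exp (R y / β) / Z / π' y = Real.exp (R y / β) / Z := by
      rw [div_div, mul_comm Z (π' y), ← div_div,
        mul_div_cancel_left₀ _ (ne_of_gt (hπ' y))]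
    rw [h1, Real.log_div (Real.exp_ne_zero _) (ne_of_gt hZpos), Real.log_exp]
    field_simp
    ring
  have hLstar : L πs πstar = 0 := by
    rw [hLg]
    apply Finset.sum_eq_zero
    intro y _
    have hsum : ∑ z, πs z * (β * Real.log (πstar z / π' z) - R z) = -(β * Real.log Z) := by
      have : ∀ z ∈ Finset.univ, πs z * (β * Real.log (πstar z / π' z) - R z)
          = πs z * (-(β * Real.log Z)) := fun z _ => by rw [hstar_g z]
      rw [Finset.sum_congr rfl this, ← Finset.sum_mul, hπs1, one_mul]
    rw [hsum, hstar_g y]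
    ring
  have hnonneg : 0 ≤ L πs π := by
    rw [hLg]
    exact Finset.sum_nonneg fun y _ => mul_nonneg (le_of_lt (hπs y)) (sq_nonneg _)
  constructor
  · rw [hLstar]; exact hnonneg
  constructor
  · -- L πs π = 0 → π = πstar
    intro h0
    rw [hLstar] at h0
    rw [hLg] at h0
    set c : ℝ := ∑ z, πs z * (β * Real.log (π z / π' z) - R z) with hc
    have hterm : ∀ y ∈ Finset.univ, πs y *
        ((β * Real.log (π y / π' y) - R y) - c)^2 = 0 := by
      rw [← Finset.sum_eq_zero_iff_of_nonneg
        (fun y _ => mul_nonneg (le_of_lt (hπs y)) (sq_nonneg _))]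
      exact h0
    have hconst : ∀ y, β * Real.log (π y / π' y) - R y = c := by
      intro y
      have := hterm y (Finset.mem_univ y)
      have h2 : ((β * Real.log (π y / π' y) - R y) - c)^2 = 0 := by
        rcases mul_eq_zero.mp this with h | h
        · exact absurd h (ne_of_gt (hπs y))
        · exact h
      have := pow_eq_zero_iff (n := 2) (by norm_num) |>.mp h2
      linarith
    have hform : ∀ y, π y = π' y * Real.exp (R y / β) * Real.exp (c / β) := by
      intro y
      have hlog : Real.log (π y / π' y) = (R y + c) / β := by
        have := hconst y
        field_simp
        linarith [hconst y]
      have hpos : 0 < π y / π' y := div_pos (hπ y) (hπ' y)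
      have := Real.exp_log hpos
      rw [hlog] at this
      have h3 : π y / π' y = Real.exp (R y / β) * Real.exp (c / β) := by
        rw [← this, ← Real.exp_add, ← add_div]
      have h4 := (div_eq_iff (ne_of_gt (hπ' y))).mp h3
      rw [h4]; ring
    have hsum1 : Z * Real.exp (c / β) = 1 := by
      rw [← hπ1]
      rw [hZ, Finset.sum_mul]
      exact (Finset.sum_congr rfl fun y _ => (hform y).symm)
    have hexp : Real.exp (c / β) = 1 / Z := by
      field_simp
      linear_combination hsum1
    funext y
    rw [hform y, hexp, hπstar y, mul_one_div]
  · intro h; rw [h]
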